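/- Let 0 ≤ α < 1 and β > 1. A word w = w_1…w_n over the alphabet A = {0,1,…,λ} belongs to the language L^{α,β} of the (α,β)-shift if and only if for every k ∈ {1,…,n} one has a_1…a_{n−k+1} ⪯ w_k…w_n ⪯ b_1…b_{n−k+1} in the lexicographic order. -/

import Mathlib

open Filter Topology MeasureTheory ENNReal
open scoped Classical

noncomputable section

namespace AB

/-- The (α,β)-transformation `T(x) = βx + α − ⌊βx + α⌋`. -/
def T (α β : ℝ) (x : ℝ) : ℝ := β * x + α - ⌊β * x + α⌋

/-- `λ = ⌈α+β⌉ − 1`, as a natural number. -/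
def lamNat (α β : ℝ) : ℕ := (⌈α + β⌉ - 1).toNat

/-- The digit of `x ∈ [0,1)`: the index `k` with `x ∈ J_k`, namely `⌊βx + α⌋`. -/
def digit (α β : ℝ) (x : ℝ) : ℕ := (⌊β * x + α⌋).toNat

/-- The (α,β)-expansion of `x`. -/
def iSeq (α β : ℝ) (x : ℝ) : ℕ → ℕ := fun n => digit α β ((T α β)^[n] x)

/-- The one-sided (α,β)-shift: closure (in the product topology) of the set of expansions. -/
def Xab (α β : ℝ) : Set (ℕ → ℕ) :=
  closure {s | ∃ x ∈ Set.Ico (0 : ℝ) 1, s = iSeq α β x}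

/-- Word of given length read in a one-sided sequence starting at position `k`. -/
def wordN (s : ℕ → ℕ) (k len : ℕ) : List ℕ := (List.range len).map fun i => s (k + i)

/-- The language of the (α,β)-shift: finite words appearing in points of `Xab`. -/
def Lang (α β : ℝ) : Set (List ℕ) :=
  {w | ∃ s ∈ Xab α β, ∃ k : ℕ, w = wordN s k w.length}

/-- `a = i_{α,β}(0)`. -/
def aSeq (α β : ℝ) : ℕ → ℕ := iSeq α β 0

/-- The prefix of length `l` of a sequence, as a word. -/
def pre (s : ℕ → ℕ) (l : ℕ) : List ℕ := (List.range l).map s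

/-- Lexicographic (non-strict) order on words. -/
def wordLe (u v : List ℕ) : Prop := u = v ∨ List.Lex (· < ·) u v

/-- Lexicographic (non-strict) order on one-sided sequences. -/
def seqLe (x y : ℕ → ℕ) : Prop :=
  x = y ∨ ∃ n : ℕ, (∀ i < n, x i = y i) ∧ x n < y n

/-- The largest `k ≤ |w|` such that the length-`k` suffix of `w` equals the length-`k`
prefix of `s` (this is `k1` for `s = a` and `k2` for `s = b`). -/
def kk (s : ℕ → ℕ) (w : List ℕ) : ℕ :=
  Nat.findGreatest (fun k => w.drop (w.length - k) = pre s k) w.length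

/-- The set of finite prefixes of a sequence (`P^a`, `P^b`). -/
def Pset (s : ℕ → ℕ) : Set (List ℕ) := {u | ∃ l : ℕ, u = pre s l}

/-- The distinguished suffix `s(w)`. -/
def sWord (a b : ℕ → ℕ) (w : List ℕ) : List ℕ :=
  if kk b w < kk a w then w.drop (w.length - kk a w)
  else if kk a w < kk b w then w.drop (w.length - kk b w)
  else []

/-- The hat operation on `P = P^a ∪ P^b` (for `β > 3`, `α = 1/β`). -/
def hatP (a b : ℕ → ℕ) (lam : ℕ) (u : List ℕ) : List ℕ :=
  if u = [] then []
  else if u ∈ Pset a then u.dropLast ++ [u.getLast?.getD 0 + 1]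
  else if 3 ≤ u.getLast?.getD 0 then u.dropLast ++ [u.getLast?.getD 0 - 1]
  else
    (u.set (u.length - kk a u.dropLast - 2) (u.getD (u.length - kk a u.dropLast - 2) 0 - 1)).set
      (u.length - kk a u.dropLast - 1) (lam - 1)

/-- `ŵ` for `w = v·s(w)`: replace the distinguished suffix by its hat. -/
def hatW (a b : ℕ → ℕ) (lam : ℕ) (w : List ℕ) : List ℕ :=
  w.take (w.length - (sWord a b w).length) ++ hatP a b lam (sWord a b w)

/-- `w̃`: the hat operation applied twice. -/
def tildeW (a b : ℕ → ℕ) (lam : ℕ) (w : List ℕ) : List ℕ :=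
  hatW a b lam (hatW a b lam w)

/-- `z(u)` for `u ∈ P^b`. -/
def zP (a b : ℕ → ℕ) (u : List ℕ) : ℕ :=
  if u = [] then 0
  else sSup ({k : ℕ | (u ++ pre (fun i => a (kk a u + i)) k) ∈ Pset b} ∪ {0})

/-- `z(w)` for a word `w` in the language. -/
def zW (a b : ℕ → ℕ) (w : List ℕ) : ℕ :=
  if kk a w < kk b w then zP a b (w.drop (w.length - kk b w)) else 0

/-- `z̄(n) = max{z(u) : u prefix of b, |u| ≤ n}`. -/
def zbar (a b : ℕ → ℕ) (n : ℕ) : ℕ :=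
  (Finset.range (n + 1)).sup fun l => zP a b (pre b l)

/-- The natural extension `Σ^{α,β}`. -/
def SigmaAB (α β : ℝ) : Set (ℤ → ℕ) :=
  {x | ∀ k : ℤ, (fun n : ℕ => x (k + n)) ∈ Xab α β}

/-- `σ^j` on two-sided sequences. -/
def shiftI {A : Type*} (j : ℤ) (x : ℤ → A) : ℤ → A := fun n => x (n + j)

/-- Word of given length read in a two-sided sequence starting at position `k`. -/
def wordZ (x : ℤ → ℕ) (k : ℤ) (len : ℕ) : List ℕ := (List.range len).map fun i => x (k + i)

/-- The map `g : L^{α,β} → {0,1}`. -/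
def gW (a b : ℕ → ℕ) (w : List ℕ) : ℕ :=
  if kk a w = 0 ∧ 0 < kk b w ∧ b (kk b w) ≤ 1 then 0 else 1

/-- `w^♯`: the word `w` placed at positions `k,…,k+|w|−1`, followed by `g(w)` at
position `k+|w|`, and `1` at all other positions. -/
def wSharp (a b : ℕ → ℕ) (k : ℤ) (w : List ℕ) : ℤ → ℕ :=
  fun j => if k ≤ j ∧ j < k + w.length then w.getD (j - k).toNat 1
           else if j = k + w.length then gW a b w else 1

/-- The finite approximation sets `E^n ⊆ Σ^{α,β}`. -/
def En (α β : ℝ) (b : ℕ → ℕ) (n : ℕ) : Set (ℤ → ℕ) :=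
  {x | wordZ x (-(n : ℤ)) (2 * n + 1) ∈ Lang α β ∧
       x ((n : ℤ) + 1) = gW (aSeq α β) b (wordZ x (-(n : ℤ)) (2 * n + 1)) ∧
       ∀ j : ℤ, j < -(n : ℤ) ∨ (n : ℤ) + 1 < j → x j = 1}

/-- `s(x_k^-) = ε` for the left-infinite word `x_{(-∞,k-1]}`: no nonempty suffix of it is a
prefix of `a` or of `b`. -/
def leftStar (a b : ℕ → ℕ) (x : ℤ → ℕ) (k : ℤ) : Prop :=
  (∀ K : ℕ, 1 ≤ K → ¬ ∀ i : ℕ, i < K → x (k - K + i) = a i) ∧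
  (∀ K : ℕ, 1 ≤ K → ¬ ∀ i : ℕ, i < K → x (k - K + i) = b i)

/-- `E^n_{[k,l]}(v)`. -/
def EnCyl (α β : ℝ) (b : ℕ → ℕ) (n : ℕ) (k l : ℤ) (v : List ℕ) : Set (ℤ → ℕ) :=
  {x ∈ En α β b n | wordZ x k (l - k + 1).toNat = v}

/-- `E^{*,n}_{[k,l]}(v)`. -/
def EnCylStar (α β : ℝ) (b : ℕ → ℕ) (n : ℕ) (k l : ℤ) (v : List ℕ) : Set (ℤ → ℕ) :=
  {x ∈ EnCyl α β b n k l v | leftStar (aSeq α β) b x k}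

/-- The Birkhoff sum `∑_{j=−n}^{n} φ(σ^j x)`. -/
def birkhoff (φ : (ℤ → ℕ) → ℝ) (n : ℕ) (x : ℤ → ℕ) : ℝ :=
  ∑ j ∈ Finset.Icc (-(n : ℤ)) (n : ℤ), φ (shiftI j x)

/-- `Ξ^n_{[k,l]}(v)`. -/
def Xi (α β : ℝ) (b : ℕ → ℕ) (φ : (ℤ → ℕ) → ℝ) (n : ℕ) (k l : ℤ) (v : List ℕ) : ℝ :=
  ∑' x : (EnCyl α β b n k l v), Real.exp (birkhoff φ n x.1)

/-- `Ξ^{*,n}_{[k,l]}(v)`. -/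
def XiStar (α β : ℝ) (b : ℕ → ℕ) (φ : (ℤ → ℕ) → ℝ) (n : ℕ) (k l : ℤ) (v : List ℕ) : ℝ :=
  ∑' x : (EnCylStar α β b n k l v), Real.exp (birkhoff φ n x.1)

/-- `δ_i(f)`, as an extended nonnegative real. -/
def oscE {A : Type*} (f : (ℤ → A) → ℝ) (i : ℤ) : ℝ≥0∞ :=
  ⨆ (x : ℤ → A) (y : ℤ → A) (_ : ∀ k : ℤ, k ≠ i → x k = y k), ENNReal.ofReal |f x - f y|

/-- `‖f‖_δ` for a function on the full shift. -/
def enormFull {A : Type*} (f : (ℤ → A) → ℝ) : ℝ≥0∞ := ∑' i : ℤ, oscE f i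

/-- `‖f‖_δ` for a function on a subshift `X`: infimum over continuous extensions. -/
def enormOn {A : Type*} [TopologicalSpace A] (X : Set (ℤ → A)) (f : (ℤ → A) → ℝ) : ℝ≥0∞ :=
  ⨅ (g : (ℤ → A) → ℝ) (_ : Continuous g) (_ : ∀ x ∈ X, g x = f x), enormFull g

/-- `f` has bounded total oscillations on `X` (i.e. `f ∈ B(X)`). -/
def BTO {A : Type*} [TopologicalSpace A] (X : Set (ℤ → A)) (f : (ℤ → A) → ℝ) : Prop :=
  ContinuousOn f X ∧ enormOn X f ≠ ⊤

/-- The real value of `‖f‖_δ`. -/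
def dnorm {A : Type*} [TopologicalSpace A] (X : Set (ℤ → A)) (f : (ℤ → A) → ℝ) : ℝ :=
  (enormOn X f).toReal

/-- The pressure `p(φ)`. -/
def pressure (α β : ℝ) (b : ℕ → ℕ) (φ : (ℤ → ℕ) → ℝ) : ℝ :=
  limUnder atTop fun n : ℕ =>
    Real.log (∑' x : (En α β b n), Real.exp (birkhoff φ n x.1)) / (2 * n + 1)

/-- `ν` is a tangent functional to the pressure at `φ` (an equilibrium measure for `φ`). -/
def IsTangent (α β : ℝ) (b : ℕ → ℕ) (φ : (ℤ → ℕ) → ℝ) (ν : Measure (ℤ → ℕ)) : Prop :=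
  ∀ f : (ℤ → ℕ) → ℝ, ContinuousOn f (SigmaAB α β) →
    pressure α β b φ + ∫ x, f x ∂ν ≤ pressure α β b (fun x => φ x + f x)

/-- The cylinder `[x_1 … x_m]` in `Σ^{α,β}`. -/
def cyl (α β : ℝ) (x : ℤ → ℕ) (m : ℕ) : Set (ℤ → ℕ) :=
  {y ∈ SigmaAB α β | ∀ i : ℕ, 1 ≤ i → i ≤ m → y (i : ℤ) = x (i : ℤ)}

/-- `ν` is a weak Gibbs measure for `ψ` on `Σ^{α,β}`. -/
def WeakGibbs (α β : ℝ) (ν : Measure (ℤ → ℕ)) (ψ : (ℤ → ℕ) → ℝ) : Prop :=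
  ∀ δ : ℝ, 0 < δ → ∃ N : ℕ, ∀ m : ℕ, N ≤ m → ∀ x ∈ SigmaAB α β,
    |Real.log (ν (cyl α β x m)).toReal / m -
      (∑ l ∈ Finset.Icc (1 : ℤ) (m : ℤ), ψ (shiftI l x)) / m| ≤ δ


/-- Concatenation `w·x` of a word and a one-sided sequence. -/
def wordApp (w : List ℕ) (x : ℕ → ℕ) : ℕ → ℕ :=
  fun n => if n < w.length then w.getD n 1 else x (n - w.length)

/-- `σ^k` on one-sided sequences. -/
def shiftN (k : ℕ) (s : ℕ → ℕ) : ℕ → ℕ := fun n => s (k + n)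

end AB

namespace AB


section Aux

variable {α β : ℝ}

lemma T_eq_fract (α β x : ℝ) : T α β x = Int.fract (β * x + α) := rfl

lemma T_nonneg (α β x : ℝ) : 0 ≤ T α β x := by
  rw [T_eq_fract]; exact Int.fract_nonneg _

lemma T_lt_one (α β x : ℝ) : T α β x < 1 := by
  rw [T_eq_fract]; exact Int.fract_lt_one _

lemma iterT_mem {x : ℝ} (hx : x ∈ Set.Ico (0:ℝ) 1) (k : ℕ) :
    (T α β)^[k] x ∈ Set.Ico (0:ℝ) 1 := by
  induction k with
  | zero => exact hx
  | succ k _ => rw [Function.iterate_succ_apply']; exact ⟨T_nonneg _ _ _, T_lt_one _ _ _⟩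

lemma pre_length (s : ℕ → ℕ) (l : ℕ) : (pre s l).length = l := by simp [pre]

lemma pre_zero (s : ℕ → ℕ) : pre s 0 = [] := rfl

lemma pre_succ (s : ℕ → ℕ) (n : ℕ) :
    pre s (n + 1) = s 0 :: pre (fun i => s (i + 1)) n := by
  simp [pre, List.range_succ_eq_map, List.map_map, Function.comp]

lemma iSeq_succ (α β x : ℝ) (i : ℕ) :
    iSeq α β x (i + 1) = iSeq α β (T α β x) i := by
  simp [iSeq, Function.iterate_succ_apply]

lemma pre_iSeq_succ (α β x : ℝ) (n : ℕ) :
    pre (iSeq α β x) (n + 1) = digit α β x :: pre (iSeq α β (T α β x)) n := by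
  rw [pre_succ]
  congr 1

lemma iSeq_shift (α β x : ℝ) (k i : ℕ) :
    iSeq α β x (k + i) = iSeq α β ((T α β)^[k] x) i := by
  simp [iSeq, ← Function.iterate_add_apply, Nat.add_comm]


lemma lex_irrefl (l : List ℕ) : ¬ List.Lex (· < ·) l l := by
  induction l with
  | nil => intro h; cases h
  | cons a l ih =>
    intro h
    cases h with
    | cons h => exact ih h
    | rel h => exact lt_irrefl _ h

lemma lex_asymm {u v : List ℕ} (h : List.Lex (· < ·) u v) : ¬ List.Lex (· < ·) v u := by
  intro h2
  induction h with
  | nil => cases h2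
  | @cons a l₁ l₂ h ih =>
    cases h2 with
    | cons h2 => exact ih h2
    | rel h2 => exact lt_irrefl _ h2
  | @rel a₁ l₁ a₂ l₂ h =>
    cases h2 with
    | cons h2 => exact lt_irrefl _ h
    | rel h2 => exact absurd h (not_lt.2 h2.le)

lemma lex_trans {u v w : List ℕ} (h1 : List.Lex (· < ·) u v) (h2 : List.Lex (· < ·) v w) :
    List.Lex (· < ·) u w := by
  induction h1 generalizing w with
  | nil =>
    cases h2 with
    | cons _ => exact List.Lex.nil
    | rel _ => exact List.Lex.nil
  | @cons a l₁ l₂ h ih =>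
    cases h2 with
    | cons h2 => exact List.Lex.cons (ih h2)
    | rel h2 => exact List.Lex.rel h2
  | @rel a₁ l₁ a₂ l₂ h =>
    cases h2 with
    | cons h2 => exact List.Lex.rel h
    | rel h2 => exact List.Lex.rel (h.trans h2)

lemma wordLe_refl (u : List ℕ) : wordLe u u := Or.inl rfl

lemma wordLe_trans {u v w : List ℕ} (h1 : wordLe u v) (h2 : wordLe v w) : wordLe u w := by
  rcases h1 with rfl | h1
  · exact h2
  rcases h2 with rfl | h2
  · exact Or.inr h1
  · exact Or.inr (lex_trans h1 h2)

lemma wordLe_antisymm {u v : List ℕ} (h1 : wordLe u v) (h2 : wordLe v u) : u = v := by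
  rcases h1 with rfl | h1
  · rfl
  rcases h2 with rfl | h2
  · rfl
  · exact absurd h2 (lex_asymm h1)

lemma lex_total (u v : List ℕ) : u = v ∨ List.Lex (· < ·) u v ∨ List.Lex (· < ·) v u := by
  induction u generalizing v with
  | nil =>
    cases v with
    | nil => exact Or.inl rfl
    | cons b v => exact Or.inr (Or.inl List.Lex.nil)
  | cons a u ih =>
    cases v with
    | nil => exact Or.inr (Or.inr List.Lex.nil)
    | cons b v =>
      rcases lt_trichotomy a b with h | rfl | h
      · exact Or.inr (Or.inl (List.Lex.rel h))
      · rcases ih v with rfl | h | h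
        · exact Or.inl rfl
        · exact Or.inr (Or.inl (List.Lex.cons h))
        · exact Or.inr (Or.inr (List.Lex.cons h))
      · exact Or.inr (Or.inr (List.Lex.rel h))

lemma wordLe_total (u v : List ℕ) : wordLe u v ∨ wordLe v u := by
  rcases lex_total u v with rfl | h | h
  · exact Or.inl (wordLe_refl u)
  · exact Or.inl (Or.inr h)
  · exact Or.inr (Or.inr h)

lemma lex_append_cancel {c p q : List ℕ} (h : List.Lex (· < ·) (c ++ p) (c ++ q)) :
    List.Lex (· < ·) p q := by
  induction c with
  | nil => exact h
  | cons a c ih =>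
    cases h with
    | cons h => exact ih h
    | rel h => exact absurd h (lt_irrefl _)

lemma confine : ∀ (c p q w : List ℕ), wordLe (c ++ p) w → List.Lex (· < ·) w (c ++ q) →
    ∃ w', w = c ++ w' ∧ wordLe p w' ∧ List.Lex (· < ·) w' q := by
  intro c
  induction c with
  | nil => exact fun p q w h1 h2 => ⟨w, rfl, h1, h2⟩
  | cons a c ih =>
    intro p q w h1 h2
    rcases h1 with h1 | h1
    · subst h1
      have h3 : List.Lex (· < ·) (c ++ p) (c ++ q) := by
        cases h2 with
        | cons h => exact h
        | rel h => exact absurd h (lt_irrefl _)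
      exact ⟨p, rfl, wordLe_refl _, lex_append_cancel h3⟩
    · cases w with
      | nil => cases h1
      | cons d w₂ =>
        cases h1 with
        | rel hab =>
          exfalso
          cases h2 with
          | cons h => exact absurd hab (lt_irrefl _)
          | rel h => exact absurd hab (not_lt.2 h.le)
        | cons h1' =>
          have h2' : List.Lex (· < ·) w₂ (c ++ q) := by
            cases h2 with
            | cons h => exact h
            | rel h => exact absurd h (lt_irrefl _)
          obtain ⟨w', rfl, hp, hq⟩ := ih p q w₂ (Or.inr h1') h2'
          exact ⟨w', rfl, hp, hq⟩

lemma digit_mono (hβ : 0 < β) {x y : ℝ} (hxy : x ≤ y) : digit α β x ≤ digit α β y := by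
  have : ⌊β * x + α⌋ ≤ ⌊β * y + α⌋ := Int.floor_le_floor (by nlinarith)
  exact Int.toNat_le_toNat this

lemma floor_eq_of_digit_eq (hα0 : 0 ≤ α) (hβ : 0 < β) {x y : ℝ} (hx : 0 ≤ x) (hy : 0 ≤ y)
    (hd : digit α β x = digit α β y) : ⌊β * x + α⌋ = ⌊β * y + α⌋ := by
  have h1 : (0:ℤ) ≤ ⌊β * x + α⌋ := Int.floor_nonneg.2 (by nlinarith)
  have h2 : (0:ℤ) ≤ ⌊β * y + α⌋ := Int.floor_nonneg.2 (by nlinarith)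
  unfold digit at hd
  omega

lemma iSeq_le (hα0 : 0 ≤ α) (hβ : 0 < β) :
    ∀ (n : ℕ) {x y : ℝ}, 0 ≤ x → x ≤ y →
      wordLe (pre (iSeq α β x) n) (pre (iSeq α β y) n) := by
  intro n
  induction n with
  | zero => intro x y _ _; exact Or.inl rfl
  | succ n ih =>
    intro x y hx hxy
    rw [pre_iSeq_succ, pre_iSeq_succ]
    rcases (digit_mono hβ hxy).lt_or_eq with h | h
    · exact Or.inr (List.Lex.rel h)
    · have hfl := floor_eq_of_digit_eq hα0 hβ hx (hx.trans hxy) h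
      have hT : T α β x ≤ T α β y := by
        unfold T; rw [hfl]; nlinarith
      rcases ih (T_nonneg α β x) hT with h2 | h2
      · exact Or.inl (by rw [h, h2])
      · rw [h]
        exact Or.inr (List.Lex.cons h2)


lemma right_const (hα0 : 0 ≤ α) (hβ : 0 < β) :
    ∀ (n : ℕ) {x : ℝ}, 0 ≤ x →
      ∃ ε > 0, ∀ t, x ≤ t → t < x + ε → pre (iSeq α β t) n = pre (iSeq α β x) n := by
  intro n
  induction n with
  | zero => intro x _; exact ⟨1, one_pos, fun _ _ _ => rfl⟩
  | succ n ih =>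
    intro x hx
    set K := ⌊β * x + α⌋ with hK
    obtain ⟨ε₂, hε₂, hIH⟩ := ih (T_nonneg α β x)
    have hKlt : β * x + α < K + 1 := Int.lt_floor_add_one _
    set ε₁ : ℝ := ((K : ℝ) + 1 - (β * x + α)) / β with hε₁def
    have hε₁ : 0 < ε₁ := by
      apply div_pos _ hβ; linarith
    refine ⟨min ε₁ (ε₂ / β), lt_min hε₁ (div_pos hε₂ hβ), ?_⟩
    intro t hxt htx
    have ht1 : t < x + ε₁ := lt_of_lt_of_le htx (by gcongr; exact min_le_left _ _)
    have ht2 : t < x + ε₂ / β := lt_of_lt_of_le htx (by gcongr; exact min_le_right _ _)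
    have hfl : ⌊β * t + α⌋ = K := by
      rw [Int.floor_eq_iff]
      constructor
      · have : (K:ℝ) ≤ β * x + α := Int.floor_le _
        nlinarith
      · have : β * t < β * (x + ε₁) := by nlinarith
        have hβε : β * ε₁ = (K : ℝ) + 1 - (β * x + α) := by
          rw [hε₁def]; field_simp
        nlinarith
    have hdig : digit α β t = digit α β x := by unfold digit; rw [hfl]
    have hTt : T α β t = T α β x + β * (t - x) := by
      unfold T; rw [hfl, ← hK]; ring
    have hfs : β * (ε₂ / β) = ε₂ := by field_simp
    rw [pre_iSeq_succ, pre_iSeq_succ, hdig, hIH (T α β t) (by nlinarith) (by nlinarith)]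

lemma eventually_pre_eq (b : ℕ → ℕ) (hb : Tendsto (iSeq α β) (𝓝[<] (1 : ℝ)) (𝓝 b)) (M : ℕ) :
    ∃ c < (1:ℝ), ∀ y, c < y → y < 1 → pre (iSeq α β y) M = pre b M := by
  have h1 : ∀ᶠ s : ℕ → ℕ in 𝓝 b, pre s M = pre b M := by
    have h2 : ∀ᶠ s : ℕ → ℕ in 𝓝 b, ∀ i ∈ Finset.range M, s i = b i := by
      rw [Filter.eventually_all_finset]
      intro i _
      have hopen : IsOpen ((fun s : ℕ → ℕ => s i) ⁻¹' {b i}) :=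
        (isOpen_discrete _).preimage (continuous_apply i)
      exact Filter.eventually_of_mem (hopen.mem_nhds rfl) fun s hs => hs
    filter_upwards [h2] with s hs
    exact List.map_congr_left fun i hi => hs i (by simpa using hi)
  have h3 := hb.eventually h1
  rcases mem_nhdsLT_iff_exists_Ioo_subset.1 h3 with ⟨c, hc, hsub⟩
  exact ⟨c, hc, fun y hy1 hy2 => hsub ⟨hy1, hy2⟩⟩

lemma left_jump (hα0 : 0 ≤ α) (hβ : 0 < β) (b : ℕ → ℕ)
    (hB : ∀ M : ℕ, ∃ c < (1:ℝ), ∀ y, c < y → y < 1 → pre (iSeq α β y) M = pre b M) :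
    ∀ (n : ℕ) {x : ℝ}, 0 < x → x < 1 →
      ∃ ε > 0, ε ≤ x ∧
        ((∀ t, x - ε < t → t < x → pre (iSeq α β t) n = pre (iSeq α β x) n) ∨
         (∃ j < n, ∃ m : ℕ,
           pre (iSeq α β x) n =
             pre (iSeq α β x) j ++ (m + 1) :: pre (aSeq α β) (n - j - 1) ∧
           ∀ t, x - ε < t → t < x →
             pre (iSeq α β t) n = pre (iSeq α β x) j ++ m :: pre b (n - j - 1))) := by
  intro n
  induction n with
  | zero =>
    intro x hx0 _
    exact ⟨x, hx0, le_refl x, Or.inl fun _ _ _ => rfl⟩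
  | succ n ih =>
    intro x hx0 hx1
    set K := ⌊β * x + α⌋ with hK
    have hKle : (K:ℝ) ≤ β * x + α := Int.floor_le _
    have hKlt : β * x + α < K + 1 := Int.lt_floor_add_one _
    by_cases hTx : T α β x = 0
    · -- boundary case: β x + α is an integer K ≥ 1
      have hFK : β * x + α = K := by
        have : β * x + α - K = 0 := hTx
        linarith
      have hKpos : 1 ≤ K := by
        have h0 : (0:ℝ) < β * x + α := by nlinarith
        rw [hFK] at h0
        exact_mod_cast h0
      obtain ⟨c, hc1, hc⟩ := hB n
      set c' := max c 0 with hc'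
      have hc'1 : c' < 1 := max_lt hc1 one_pos
      have hc'0 : 0 ≤ c' := le_max_right _ _
      set ε := min x ((1 - c') / β) with hε
      have hεpos : 0 < ε := lt_min hx0 (div_pos (by linarith) hβ)
      have hεx : ε ≤ x := min_le_left _ _
      have hεc : β * ε ≤ 1 - c' := by
        have : ε ≤ (1 - c') / β := min_le_right _ _
        calc β * ε ≤ β * ((1 - c') / β) := by nlinarith
        _ = 1 - c' := by field_simp
      have hdigx : digit α β x = K.toNat := by unfold digit; rw [← hK]
      have key : ∀ t, x - ε < t → t < x →
          ⌊β * t + α⌋ = K - 1 ∧ T α β t = β * t + α - (K - 1) := by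
        intro t ht1 ht2
        have hfl : ⌊β * t + α⌋ = K - 1 := by
          rw [Int.floor_eq_iff]
          push_cast
          constructor
          · nlinarith
          · nlinarith
        exact ⟨hfl, by unfold T; rw [hfl]; push_cast; ring⟩
      refine ⟨ε, hεpos, hεx, Or.inr ⟨0, Nat.succ_pos n, K.toNat - 1, ?_, ?_⟩⟩
      · have hm : K.toNat - 1 + 1 = K.toNat := by omega
        rw [pre_iSeq_succ, hTx]
        simp only [pre_zero, List.nil_append, Nat.add_sub_cancel, Nat.sub_zero]
        rw [hm, hdigx]
        rfl
      · intro t ht1 ht2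
        obtain ⟨hfl, hTt⟩ := key t ht1 ht2
        have hdigt : digit α β t = K.toNat - 1 := by
          unfold digit; rw [hfl]; omega
        have hTt1 : T α β t < 1 := T_lt_one _ _ _
        have hTtc : c < T α β t := by
          have h1 : c ≤ c' := le_max_left _ _
          have : T α β t = 1 - β * (x - t) := by rw [hTt]; linarith
          nlinarith
        rw [pre_iSeq_succ, hdigt, hc (T α β t) hTtc hTt1]
        simp only [pre_zero, List.nil_append, Nat.add_sub_cancel, Nat.sub_zero]
    · -- interior case: T x > 0
      have hTpos : 0 < T α β x := lt_of_le_of_ne (T_nonneg α β x) (Ne.symm hTx)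
      obtain ⟨ε₂, hε₂pos, hε₂le, hbr⟩ := ih hTpos (T_lt_one α β x)
      set ε := min (T α β x / β) (min (ε₂ / β) x) with hε
      have hεpos : 0 < ε :=
        lt_min (div_pos hTpos hβ) (lt_min (div_pos hε₂pos hβ) hx0)
      have hεx : ε ≤ x := (min_le_right _ _).trans (min_le_right _ _)
      have hεT : β * ε ≤ T α β x := by
        have h1 : ε ≤ T α β x / β := min_le_left _ _
        calc β * ε ≤ β * (T α β x / β) := by nlinarith
        _ = T α β x := by field_simp
      have hεε₂ : β * ε ≤ ε₂ := by
        have h1 : ε ≤ ε₂ / β := (min_le_right _ _).trans (min_le_left _ _)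
        calc β * ε ≤ β * (ε₂ / β) := by nlinarith
        _ = ε₂ := by field_simp
      have hTval : T α β x = β * x + α - K := rfl
      have key : ∀ t, x - ε < t → t < x →
          digit α β t = digit α β x ∧
          T α β x - ε₂ < T α β t ∧ T α β t < T α β x := by
        intro t ht1 ht2
        have hfl : ⌊β * t + α⌋ = K := by
          rw [Int.floor_eq_iff]
          constructor
          · nlinarith
          · nlinarith
        have hTt : T α β t = β * t + α - K := by unfold T; rw [hfl]
        refine ⟨by unfold digit; rw [hfl], by nlinarith, by nlinarith⟩
      rcases hbr with hconst | ⟨j, hjn, m, hxeq, hteq⟩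
      · refine ⟨ε, hεpos, hεx, Or.inl ?_⟩
        intro t ht1 ht2
        obtain ⟨hd, hl, hr⟩ := key t ht1 ht2
        rw [pre_iSeq_succ, pre_iSeq_succ, hd, hconst (T α β t) hl hr]
      · refine ⟨ε, hεpos, hεx, Or.inr ⟨j + 1, by omega, m, ?_, ?_⟩⟩
        · rw [pre_iSeq_succ, pre_iSeq_succ, hxeq]
          simp [Nat.succ_sub_succ]
        · intro t ht1 ht2
          obtain ⟨hd, hl, hr⟩ := key t ht1 ht2
          rw [pre_iSeq_succ, pre_iSeq_succ, hd, hteq (T α β t) hl hr]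
          simp [Nat.succ_sub_succ]


lemma pre_drop (s : ℕ → ℕ) (m d : ℕ) :
    (pre s m).drop d = pre (fun i => s (d + i)) (m - d) := by
  apply List.ext_getElem
  · simp [pre]
  · intro i h1 h2
    simp [pre, List.getElem_drop]

lemma closure_approx {S : Set (ℕ → ℕ)} {s : ℕ → ℕ} (hs : s ∈ closure S) (N : ℕ) :
    ∃ s' ∈ S, ∀ i < N, s' i = s i := by
  have hU : IsOpen {y : ℕ → ℕ | ∀ i < N, y i = s i} := by
    have he : {y : ℕ → ℕ | ∀ i < N, y i = s i} =
        ⋂ i ∈ Finset.range N, (fun y : ℕ → ℕ => y i) ⁻¹' {s i} := by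
      ext y; simp [Finset.mem_range]
    rw [he]
    exact isOpen_biInter_finset fun i _ => (isOpen_discrete _).preimage (continuous_apply i)
  rcases mem_closure_iff.1 hs _ hU (fun i _ => rfl) with ⟨s', hs1, hs2⟩
  exact ⟨s', hs2, hs1⟩

end Aux

/-- lexicographic characterization of the language of the (α,β)-shift. -/
theorem stmt0 (α β : ℝ) (hα0 : 0 ≤ α) (hα1 : α < 1) (hβ : 1 < β)
    (b : ℕ → ℕ) (hb : Tendsto (iSeq α β) (𝓝[<] (1 : ℝ)) (𝓝 b))
    (w : List ℕ) (hw : ∀ c ∈ w, c ≤ lamNat α β) :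
    w ∈ Lang α β ↔
      ∀ k : ℕ, 1 ≤ k → k ≤ w.length →
        wordLe (pre (aSeq α β) (w.length - k + 1)) (w.drop (k - 1)) ∧
        wordLe (w.drop (k - 1)) (pre b (w.length - k + 1)) := by
  have hβ0 : (0:ℝ) < β := lt_trans one_pos hβ
  have hB := eventually_pre_eq (α := α) (β := β) b hb
  constructor
  · rintro ⟨s, hsX, k0, hws⟩ k hk1 hkn
    obtain ⟨s', ⟨x, hx, rfl⟩, hagree⟩ := closure_approx hsX (k0 + w.length)
    have hwx : w = pre (iSeq α β ((T α β)^[k0] x)) w.length := by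
      conv_lhs => rw [hws]
      simp only [wordN, pre]
      refine List.map_congr_left fun i hi => ?_
      rw [List.mem_range] at hi
      exact (hagree (k0 + i) (by omega)).symm.trans (iSeq_shift α β x k0 i)
    have hyI : (T α β)^[k0] x ∈ Set.Ico (0:ℝ) 1 := iterT_mem hx k0
    set y := (T α β)^[k0] x with hy
    have hdrop : w.drop (k - 1) = pre (iSeq α β ((T α β)^[k - 1] y)) (w.length - k + 1) := by
      conv_lhs => rw [hwx]
      rw [pre_drop]
      have h1 : w.length - (k - 1) = w.length - k + 1 := by omega
      rw [h1]
      simp only [pre]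
      exact List.map_congr_left fun i _ => iSeq_shift α β y (k - 1) i
    have hzI : (T α β)^[k - 1] y ∈ Set.Ico (0:ℝ) 1 := iterT_mem hyI (k - 1)
    refine ⟨?_, ?_⟩
    · rw [hdrop]
      exact iSeq_le hα0 hβ0 _ le_rfl hzI.1
    · obtain ⟨c, hc1, hc⟩ := hB (w.length - k + 1)
      set z := (T α β)^[k - 1] y with hz
      set y2 := (max z c + 1) / 2 with hy2
      have hmax1 : max z c < 1 := max_lt hzI.2 hc1
      have hzy2 : z < y2 := by
        have h1 : z ≤ max z c := le_max_left _ _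
        rw [hy2]; linarith
      have hcy2 : c < y2 := by
        have h1 : c ≤ max z c := le_max_right _ _
        rw [hy2]; linarith
      have hy21 : y2 < 1 := by rw [hy2]; linarith
      rw [hdrop, ← hc y2 hcy2 hy21]
      exact iSeq_le hα0 hβ0 _ hzI.1 hzy2.le
  · intro hadm
    rcases Nat.eq_zero_or_pos w.length with hn0 | hn1
    · have hwnil : w = [] := List.length_eq_zero_iff.1 hn0
      subst hwnil
      exact ⟨iSeq α β 0, subset_closure ⟨0, ⟨le_refl 0, one_pos⟩, rfl⟩, 0, rfl⟩
    · suffices h : ∃ x ∈ Set.Ico (0:ℝ) 1, pre (iSeq α β x) w.length = w by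
        obtain ⟨x, hx, hxe⟩ := h
        refine ⟨iSeq α β x, subset_closure ⟨x, hx, rfl⟩, 0, ?_⟩
        conv_lhs => rw [← hxe]
        simp [wordN, pre, pre_length]
      set n := w.length with hn
      set D := {t : ℝ | t ∈ Set.Ico (0:ℝ) 1 ∧ wordLe (pre (iSeq α β t) n) w} with hD
      have hidx : n - 1 + 1 = n := by omega
      have h0D : (0:ℝ) ∈ D := by
        refine ⟨⟨le_refl 0, one_pos⟩, ?_⟩
        have h := (hadm 1 le_rfl hn1).1
        rw [hidx] at h
        simpa [aSeq] using h
      have hDbdd : BddAbove D := ⟨1, fun t ht => ht.1.2.le⟩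
      have hwub : wordLe w (pre b n) := by
        have h := (hadm 1 le_rfl hn1).2
        rw [hidx] at h
        simpa using h
      obtain ⟨c, hc1, hc⟩ := hB n
      by_cases hbig : ∃ t ∈ D, c < t
      · obtain ⟨t, htD, hct⟩ := hbig
        have hpre : pre (iSeq α β t) n = pre b n := hc t hct htD.1.2
        have h1 : wordLe (pre b n) w := by rw [← hpre]; exact htD.2
        have h2 : w = pre b n := wordLe_antisymm hwub h1
        exact ⟨t, htD.1, by rw [hpre, ← h2]⟩
      · push_neg at hbig
        set x₀ := sSup D with hx₀
        have hx0le : x₀ ≤ c := csSup_le ⟨0, h0D⟩ hbig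
        have hx0lt : x₀ < 1 := lt_of_le_of_lt hx0le hc1
        have hx0ge : (0:ℝ) ≤ x₀ := le_csSup hDbdd h0D
        by_cases hreal : ∃ t ∈ D, pre (iSeq α β t) n = w
        · obtain ⟨t, htD, hte⟩ := hreal
          exact ⟨t, htD.1, hte⟩
        · push_neg at hreal
          exfalso
          by_cases hx0D : x₀ ∈ D
          · obtain ⟨ε, hεpos, hεconst⟩ := right_const hα0 hβ0 n hx0ge
            set t := x₀ + min ε (1 - x₀) / 2 with ht
            have hmpos : 0 < min ε (1 - x₀) := lt_min hεpos (by linarith)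
            have hm1 : min ε (1 - x₀) ≤ ε := min_le_left _ _
            have hm2 : min ε (1 - x₀) ≤ 1 - x₀ := min_le_right _ _
            have ht1 : x₀ < t := by rw [ht]; linarith
            have ht2 : t < x₀ + ε := by rw [ht]; linarith
            have ht3 : t < 1 := by rw [ht]; linarith
            have htD : t ∈ D := by
              refine ⟨⟨by rw [ht]; linarith, ht3⟩, ?_⟩
              rw [hεconst t ht1.le ht2]
              exact hx0D.2
            exact absurd (le_csSup hDbdd htD) (not_le.2 ht1)
          · have hx0pos : 0 < x₀ := lt_of_le_of_ne hx0ge fun h => hx0D (h ▸ h0D)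
            have hmemD : ∀ t, 0 ≤ t → t < x₀ → t ∈ D := by
              intro t ht0 htx
              obtain ⟨t₂, ht₂D, htt₂⟩ := exists_lt_of_lt_csSup ⟨0, h0D⟩ htx
              exact ⟨⟨ht0, lt_trans htt₂ ht₂D.1.2⟩,
                wordLe_trans (iSeq_le hα0 hβ0 n ht0 htt₂.le) ht₂D.2⟩
            have hnotle : ¬ wordLe (pre (iSeq α β x₀) n) w :=
              fun h => hx0D ⟨⟨hx0ge, hx0lt⟩, h⟩
            have hwltu : List.Lex (· < ·) w (pre (iSeq α β x₀) n) := by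
              rcases wordLe_total (pre (iSeq α β x₀) n) w with h | h
              · exact absurd h hnotle
              · rcases h with h | h
                · exact absurd (h ▸ wordLe_refl w) hnotle
                · exact h
            obtain ⟨ε, hεpos, hεx, hbr⟩ := left_jump hα0 hβ0 b hB n hx0pos hx0lt
            set t := x₀ - ε / 2 with ht
            have htgt : x₀ - ε < t := by rw [ht]; linarith
            have htlt : t < x₀ := by rw [ht]; linarith
            have ht0 : 0 ≤ t := by rw [ht]; linarith
            have htD : t ∈ D := hmemD t ht0 htlt
            rcases hbr with hconst | ⟨j, hjn, m, hxeq, hteq⟩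
            · apply hnotle
              rw [← hconst t htgt htlt]
              exact htD.2
            · have hvw : wordLe (pre (iSeq α β x₀) j ++ m :: pre b (n - j - 1)) w := by
                rw [← hteq t htgt htlt]
                exact htD.2
              have hwu : List.Lex (· < ·) w
                  (pre (iSeq α β x₀) j ++ (m + 1) :: pre (aSeq α β) (n - j - 1)) := by
                rw [← hxeq]; exact hwltu
              obtain ⟨w', hw'eq, hlow, hup⟩ := confine _ _ _ _ hvw hwu
              cases w' with
              | nil =>
                rcases hlow with h | h
                · exact (List.cons_ne_nil _ _) h
                · exact List.not_lex_nil h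
              | cons d w'' =>
                have hcases : (d = m ∧ wordLe (pre b (n - j - 1)) w'') ∨
                    (d = m + 1 ∧ List.Lex (· < ·) w'' (pre (aSeq α β) (n - j - 1))) := by
                  rcases hlow with heq | hlex
                  · rw [List.cons.injEq] at heq
                    exact Or.inl ⟨heq.1.symm, Or.inl heq.2⟩
                  · cases hlex with
                    | cons h => exact Or.inl ⟨rfl, Or.inr h⟩
                    | rel hmd =>
                      cases hup with
                      | cons h => exact Or.inr ⟨rfl, h⟩
                      | rel hdm => exact absurd hdm (by omega)
                have hlen : w''.length = n - j - 1 := by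
                  have h1 := congrArg List.length hw'eq
                  simp only [List.length_append, List.length_cons, pre_length, ← hn] at h1
                  omega
                have hdropw : w.drop (j + 1) = w'' := by
                  rw [hw'eq]
                  have h2 : j + 1 = (pre (iSeq α β x₀) j).length + 1 := by rw [pre_length]
                  rw [h2, List.drop_append]
                  simp
                rcases hcases with ⟨rfl, hBw⟩ | ⟨rfl, hwA⟩
                · have hw''B : w'' = pre b (n - j - 1) := by
                    rcases Nat.lt_or_ge (j + 1) n with hj2 | hj2
                    · have h := (hadm (j + 2) (by omega) (by omega)).2
                      have e1 : j + 2 - 1 = j + 1 := by omega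
                      have e2 : n - (j + 2) + 1 = n - j - 1 := by omega
                      rw [e1, e2, hdropw] at h
                      exact wordLe_antisymm h hBw
                    · have h0 : n - j - 1 = 0 := by omega
                      have hnil : w'' = [] := List.length_eq_zero_iff.1 (by omega)
                      rw [hnil, h0, pre_zero]
                  exact hreal t htD (by rw [hteq t htgt htlt, hw'eq, hw''B])
                · have hAlow : wordLe (pre (aSeq α β) (n - j - 1)) w'' := by
                    rcases Nat.lt_or_ge (j + 1) n with hj2 | hj2
                    · have h := (hadm (j + 2) (by omega) (by omega)).1
                      have e1 : j + 2 - 1 = j + 1 := by omega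
                      have e2 : n - (j + 2) + 1 = n - j - 1 := by omega
                      rw [e1, e2, hdropw] at h
                      exact h
                    · have h0 : n - j - 1 = 0 := by omega
                      have hnil : w'' = [] := List.length_eq_zero_iff.1 (by omega)
                      rw [hnil, h0, pre_zero]
                      exact wordLe_refl []
                  rcases hAlow with heq | hlex2
                  · rw [← heq] at hwA
                    exact lex_irrefl _ hwA
                  · exact lex_asymm hlex2 hwA


end AB
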